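/- Let Σ be a positive definite real symmetric d×d matrix and let U be a d×d orthogonal matrix. Then anscm(U Σ Uᵀ) = U · anscm(Σ) · Uᵀ. -/

import Mathlib

open MeasureTheory Matrix

noncomputable def gaussian {n : Type*} [Fintype n] [DecidableEq n] (S : Matrix n n ℝ) :
    Measure (n → ℝ) :=
  volume.withDensity fun x =>
    ENNReal.ofReal ((Real.sqrt ((2 * Real.pi) ^ (Fintype.card n) * S.det))⁻¹ *
      Real.exp (-(1 / 2) * (x ⬝ᵥ S⁻¹.mulVec x)))

/-- `anscm S` is the expected value of the normalized sample covariance matrix,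
`E[X Xᵀ / (Xᵀ X)]` for `X ∼ N(0, S)`, computed entrywise. -/
noncomputable def anscm {d : ℕ} (S : Matrix (Fin d) (Fin d) ℝ) : Matrix (Fin d) (Fin d) ℝ :=
  Matrix.of fun i j => ∫ x, (x i * x j) / (x ⬝ᵥ x) ∂ gaussian S

section Aux
open scoped ENNReal NNReal
variable {d : ℕ}


noncomputable def densX (S : Matrix (Fin d) (Fin d) ℝ) (x : Fin d → ℝ) : ℝ :=
  (Real.sqrt ((2 * Real.pi) ^ (Fintype.card (Fin d)) * S.det))⁻¹ *
    Real.exp (-(1 / 2) * (x ⬝ᵥ S⁻¹.mulVec x))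

lemma densX_nonneg (S : Matrix (Fin d) (Fin d) ℝ) (x : Fin d → ℝ) : 0 ≤ densX S x :=
  mul_nonneg (inv_nonneg.2 (Real.sqrt_nonneg _)) (Real.exp_pos _).le

lemma continuous_quad (A : Matrix (Fin d) (Fin d) ℝ) :
    Continuous fun x : Fin d → ℝ => x ⬝ᵥ A.mulVec x := by
  simp only [dotProduct, mulVec]
  exact continuous_finset_sum _ fun i _ => (continuous_apply i).mul
    (continuous_finset_sum _ fun j _ => continuous_const.mul (continuous_apply j))

lemma continuous_densX (S : Matrix (Fin d) (Fin d) ℝ) : Continuous (densX S) :=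
  continuous_const.mul (Real.continuous_exp.comp (continuous_const.mul (continuous_quad S⁻¹)))

noncomputable def mEquiv (M : Matrix (Fin d) (Fin d) ℝ) (h : Invertible M) :
    (Fin d → ℝ) ≃ᵐ (Fin d → ℝ) :=
  (M.toLinearEquiv' h).toContinuousLinearEquiv.toHomeomorph.toMeasurableEquiv

lemma mEquiv_apply (M : Matrix (Fin d) (Fin d) ℝ) (h : Invertible M) (x : Fin d → ℝ) :
    mEquiv M h x = M.mulVec x := rfl

lemma map_mEquiv (M : Matrix (Fin d) (Fin d) ℝ) (h : Invertible M) (hdet : M.det ≠ 0) :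
    volume.map (mEquiv M h) = ENNReal.ofReal |M.det|⁻¹ • volume := by
  have : ⇑(mEquiv M h) = ⇑(Matrix.toLin' M) := funext fun x => by
    rw [mEquiv_apply, Matrix.toLin'_apply]
  rw [this, Real.map_matrix_volume_pi_eq_smul_volume_pi hdet, abs_inv]

lemma integral_gaussian_eq (S : Matrix (Fin d) (Fin d) ℝ) (f : (Fin d → ℝ) → ℝ) :
    ∫ x, f x ∂ gaussian S = ∫ x, densX S x * f x ∂ (volume : Measure (Fin d → ℝ)) := by
  have hg : gaussian S = volume.withDensity fun x => ((densX S x).toNNReal : ℝ≥0∞) := rfl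
  rw [hg, integral_withDensity_eq_integral_smul
    ((continuous_densX S).measurable.real_toNNReal) f]
  refine integral_congr_ae (Filter.Eventually.of_forall fun x => ?_)
  simp [NNReal.smul_def, Real.coe_toNNReal _ (densX_nonneg S x)]

lemma dot_self_nonneg (y : Fin d → ℝ) : 0 ≤ y ⬝ᵥ y :=
  Finset.sum_nonneg fun i _ => mul_self_nonneg (y i)

lemma abs_apply_le_sqrt_dot (y : Fin d → ℝ) (k : Fin d) : |y k| ≤ Real.sqrt (y ⬝ᵥ y) := by
  rw [show |y k| = Real.sqrt ((y k) * (y k)) from (Real.sqrt_mul_self_eq_abs _).symm]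
  exact Real.sqrt_le_sqrt (Finset.single_le_sum (f := fun i => y i * y i)
    (fun i _ => mul_self_nonneg (y i)) (Finset.mem_univ k))

lemma abs_mul_le_dot (y : Fin d → ℝ) (k l : Fin d) : |y k * y l| ≤ y ⬝ᵥ y := by
  rw [abs_mul]
  calc |y k| * |y l| ≤ Real.sqrt (y ⬝ᵥ y) * Real.sqrt (y ⬝ᵥ y) :=
        mul_le_mul (abs_apply_le_sqrt_dot y k) (abs_apply_le_sqrt_dot y l)
          (abs_nonneg _) (Real.sqrt_nonneg _)
    _ = y ⬝ᵥ y := Real.mul_self_sqrt (dot_self_nonneg y)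

lemma integrable_exp_quad (A : Matrix (Fin d) (Fin d) ℝ) (hA : A.PosDef) :
    Integrable (fun x : Fin d → ℝ => Real.exp (-(1 / 2) * (x ⬝ᵥ A.mulVec x))) := by
  have hps := hA.posSemidef
  open scoped MatrixOrder Matrix.Norms.L2Operator in
  set B := CFC.sqrt A with hBdef
  open scoped MatrixOrder Matrix.Norms.L2Operator in
  have hBB : B * B = A := CFC.sqrt_mul_sqrt_self A hps.nonneg
  have hBsym : Bᵀ = B := by
    open scoped MatrixOrder Matrix.Norms.L2Operator in
    have := (CFC.sqrt_nonneg A).posSemidef.1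
    simpa [Matrix.IsHermitian, Matrix.conjTranspose_eq_transpose_of_trivial, hBdef] using this
  have hdetB : B.det ≠ 0 := by
    intro h
    have : A.det = 0 := by rw [← hBB, Matrix.det_mul, h, mul_zero]
    exact hA.det_pos.ne' this
  have hBinv : Invertible B := B.invertibleOfIsUnitDet (isUnit_iff_ne_zero.mpr hdetB)
  -- product gaussian is integrable
  have hg : Integrable (fun z : Fin d → ℝ => Real.exp (-(1 / 2) * (z ⬝ᵥ z))) := by
    have h1 : Integrable (fun t : ℝ => Real.exp (-(1 / 2) * t ^ 2)) :=
      integrable_exp_neg_mul_sq (by norm_num)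
    have := Integrable.fintype_prod (𝕜 := ℝ) (f := fun _ : Fin d => fun t : ℝ => Real.exp (-(1 / 2) * t ^ 2)) (fun _ => h1)
    refine this.congr (Filter.Eventually.of_forall fun z => ?_)
    show (∏ i : Fin d, Real.exp (-(1 / 2) * (z i) ^ 2)) = Real.exp (-(1 / 2) * (z ⬝ᵥ z))
    rw [← Real.exp_sum, dotProduct, Finset.mul_sum]
    congr 1
    exact Finset.sum_congr rfl fun i _ => by ring
  -- change of variables
  have hmap := map_mEquiv B hBinv hdetB
  have hg2 : Integrable (fun z : Fin d → ℝ => Real.exp (-(1 / 2) * (z ⬝ᵥ z)))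
      (volume.map (mEquiv B hBinv)) := by
    rw [hmap]
    exact hg.smul_measure ENNReal.ofReal_ne_top
  have hcomp := ((mEquiv B hBinv).measurableEmbedding.integrable_map_iff).mp hg2
  refine hcomp.congr (Filter.Eventually.of_forall fun y => ?_)
  have hq : y ⬝ᵥ A.mulVec y = (B.mulVec y) ⬝ᵥ (B.mulVec y) := by
    rw [← hBB, ← Matrix.mulVec_mulVec, Matrix.dotProduct_mulVec, ← Matrix.mulVec_transpose,
      hBsym]
  simp only [Function.comp_apply, mEquiv_apply]
  rw [hq]

lemma integrable_densX (S : Matrix (Fin d) (Fin d) ℝ) (hS : S.PosDef) :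
    Integrable (densX S) :=
  (integrable_exp_quad S⁻¹ hS.inv).const_mul _

lemma integrable_term (S : Matrix (Fin d) (Fin d) ℝ) (hS : S.PosDef) (k l : Fin d) :
    Integrable (fun y : Fin d → ℝ => densX S y * (y k * y l / (y ⬝ᵥ y))) := by
  have measurable_dot : Measurable fun y : Fin d → ℝ => y ⬝ᵥ y := by
    simp only [dotProduct]
    exact Finset.measurable_sum _ fun i _ => (measurable_pi_apply i).mul (measurable_pi_apply i)
  refine (integrable_densX S hS).mono' ?_ (Filter.Eventually.of_forall fun y => ?_)
  · exact ((continuous_densX S).measurable.mul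
      (((measurable_pi_apply k).mul (measurable_pi_apply l)).div measurable_dot)).aestronglyMeasurable
  · rw [norm_mul, Real.norm_eq_abs, Real.norm_eq_abs, abs_of_nonneg (densX_nonneg S y)]
    have h1 : |y k * y l / (y ⬝ᵥ y)| ≤ 1 := by
      rcases eq_or_ne (y ⬝ᵥ y) 0 with h | h
      · simp [h]
      · rw [abs_div, abs_of_nonneg (dot_self_nonneg y),
          div_le_one ((dot_self_nonneg y).lt_of_ne' h)]
        exact abs_mul_le_dot y k l
    calc densX S y * |y k * y l / (y ⬝ᵥ y)| ≤ densX S y * 1 :=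
          mul_le_mul_of_nonneg_left h1 (densX_nonneg S y)
      _ = densX S y := mul_one _


end Aux

theorem anscm_orthogonal_conj {d : ℕ} (S U : Matrix (Fin d) (Fin d) ℝ)
    (hS : S.PosDef) (hU : U * Uᵀ = 1) :
    anscm (U * S * Uᵀ) = U * anscm S * Uᵀ := by
  have hUtU : Uᵀ * U = 1 := mul_eq_one_comm.mp hU
  have hdetU2 : U.det * U.det = 1 := by
    have := congrArg Matrix.det hU
    rwa [Matrix.det_mul, Matrix.det_transpose, Matrix.det_one] at this
  have hdetU : U.det ≠ 0 := fun h => by simp [h] at hdetU2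
  have habs : |U.det| = 1 := by
    have : |U.det| * |U.det| = 1 := by rw [← abs_mul, hdetU2, abs_one]
    rcases mul_self_eq_one_iff.mp this with h | h
    · exact h
    · nlinarith [abs_nonneg U.det]
  have hSdet : IsUnit S.det := isUnit_iff_ne_zero.mpr hS.det_pos.ne'
  have hdet_conj : (U * S * Uᵀ).det = S.det := by
    rw [Matrix.det_mul, Matrix.det_mul, Matrix.det_transpose]
    calc U.det * S.det * U.det = S.det * (U.det * U.det) := by ring
      _ = S.det := by rw [hdetU2, mul_one]
  have hinv_conj : (U * S * Uᵀ)⁻¹ = U * S⁻¹ * Uᵀ := by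
    apply Matrix.inv_eq_right_inv
    calc (U * S * Uᵀ) * (U * S⁻¹ * Uᵀ) = U * (S * ((Uᵀ * U) * (S⁻¹ * Uᵀ))) := by
          simp only [Matrix.mul_assoc]
      _ = U * ((S * S⁻¹) * Uᵀ) := by rw [hUtU, Matrix.one_mul, Matrix.mul_assoc]
      _ = U * Uᵀ := by rw [Matrix.mul_nonsing_inv S hSdet, Matrix.one_mul]
      _ = 1 := hU
  -- density identity
  have hdens : ∀ y : Fin d → ℝ, densX (U * S * Uᵀ) (U.mulVec y) = densX S y := by
    intro y
    unfold densX
    rw [hdet_conj, hinv_conj]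
    congr 2
    rw [Matrix.mulVec_mulVec]
    have h1 : (U * S⁻¹ * Uᵀ) * U = U * S⁻¹ := by
      rw [Matrix.mul_assoc, hUtU, Matrix.mul_one]
    rw [h1, Matrix.dotProduct_mulVec, ← Matrix.mulVec_transpose, Matrix.transpose_mul,
      Matrix.mulVec_mulVec, Matrix.mul_assoc, hUtU, Matrix.mul_one,
      Matrix.mulVec_transpose, ← Matrix.dotProduct_mulVec]
  -- dot identity
  have hdot : ∀ y : Fin d → ℝ, (U.mulVec y) ⬝ᵥ (U.mulVec y) = y ⬝ᵥ y := by
    intro y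
    rw [Matrix.dotProduct_mulVec, ← Matrix.mulVec_transpose, Matrix.mulVec_mulVec, hUtU,
      Matrix.one_mulVec]
  -- measure preserving equiv
  have hUinv : Invertible U := U.invertibleOfIsUnitDet (isUnit_iff_ne_zero.mpr hdetU)
  have hpres : MeasurePreserving (mEquiv U hUinv) volume volume :=
    ⟨(mEquiv U hUinv).measurable, by
      rw [map_mEquiv U hUinv hdetU, habs, inv_one, ENNReal.ofReal_one, one_smul]⟩
  ext i j
  show (∫ x, (x i * x j) / (x ⬝ᵥ x) ∂ gaussian (U * S * Uᵀ)) = (U * anscm S * Uᵀ) i j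
  rw [integral_gaussian_eq]
  rw [← hpres.integral_comp' fun x => densX (U * S * Uᵀ) x * (x i * x j / (x ⬝ᵥ x))]
  have hfun : ∀ y : Fin d → ℝ,
      densX (U * S * Uᵀ) (mEquiv U hUinv y) *
        ((mEquiv U hUinv y) i * (mEquiv U hUinv y) j / ((mEquiv U hUinv y) ⬝ᵥ (mEquiv U hUinv y)))
      = ∑ k, ∑ l, U i k * U j l * (densX S y * (y k * y l / (y ⬝ᵥ y))) := by
    intro y
    rw [mEquiv_apply, hdens, hdot]
    have hi : U.mulVec y i = ∑ k, U i k * y k := rfl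
    have hj : U.mulVec y j = ∑ l, U j l * y l := rfl
    rw [hi, hj, Finset.sum_mul_sum]
    rw [Finset.sum_div, Finset.mul_sum]
    refine Finset.sum_congr rfl fun k _ => ?_
    rw [Finset.sum_div, Finset.mul_sum]
    refine Finset.sum_congr rfl fun l _ => ?_
    ring
  rw [integral_congr_ae (Filter.Eventually.of_forall hfun)]
  have hint : ∀ k l : Fin d, Integrable
      (fun y : Fin d → ℝ => U i k * U j l * (densX S y * (y k * y l / (y ⬝ᵥ y)))) :=
    fun k l => (integrable_term S hS k l).const_mul _
  rw [integral_finset_sum _ fun k _ => integrable_finset_sum _ fun l _ => hint k l]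
  simp_rw [integral_finset_sum _ fun l (_ : l ∈ Finset.univ) => hint _ l]
  -- RHS
  have hrhs : (U * anscm S * Uᵀ) i j
      = ∑ l, (∑ k, U i k * (anscm S k l)) * U j l := by
    simp [Matrix.mul_apply, Matrix.transpose_apply]
  rw [hrhs]
  rw [Finset.sum_comm]
  refine Finset.sum_congr rfl fun l _ => ?_
  rw [Finset.sum_mul]
  refine Finset.sum_congr rfl fun k _ => ?_
  rw [integral_const_mul]
  have : anscm S k l = ∫ y, densX S y * (y k * y l / (y ⬝ᵥ y)) ∂ (volume : Measure (Fin d → ℝ)) := by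
    show (∫ x, (x k * x l) / (x ⬝ᵥ x) ∂ gaussian S) = _
    rw [integral_gaussian_eq]
  rw [this]
  ring
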